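/- Let u_T : ℝⁿ → ℝ be Lipschitz and set u_T^* := S_T^+(S_T^- u_T). Then S_T^- u_T^* = S_T^- u_T, and u_T(x) ≤ u_T^*(x) for all x ∈ ℝⁿ. -/

import Mathlib

open scoped RealInnerProductSpace
open Filter

noncomputable section

/-- `n`-dimensional Euclidean space. -/
abbrev Euc (n : ℕ) := EuclideanSpace ℝ (Fin n)

/-- A real-valued function on `ℝⁿ` is Lipschitz (with some constant). -/
def IsLip {n : ℕ} (f : Euc n → ℝ) : Prop := ∃ K : NNReal, LipschitzWith K f

/-- The Legendre transform `L(q) = sup_p (⟨q,p⟫ - H(p))`. -/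
def legendre {n : ℕ} (H : Euc n → ℝ) (q : Euc n) : ℝ :=
  ⨆ p : Euc n, (⟪q, p⟫ - H p)

/-- The forward Hopf–Lax operator `(S_T^+ g)(x) = inf_y [g(y) + T·L((x-y)/T)]`. -/
def Splus {n : ℕ} (T : ℝ) (L : Euc n → ℝ) (g : Euc n → ℝ) (x : Euc n) : ℝ :=
  ⨅ y : Euc n, (g y + T * L (T⁻¹ • (x - y)))

/-- The backward operator `(S_T^- g)(x) = sup_y [g(y) - T·L((y-x)/T)]`. -/
def Sminus {n : ℕ} (T : ℝ) (L : Euc n → ℝ) (g : Euc n → ℝ) (x : Euc n) : ℝ :=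
  ⨆ y : Euc n, (g y - T * L (T⁻¹ • (y - x)))

/-- The Hessian of `H` is positive definite at every point. -/
def PosDefHessian {n : ℕ} (H : Euc n → ℝ) : Prop :=
  ∀ p v : Euc n, v ≠ 0 → 0 < iteratedFDeriv ℝ 2 H p ![v, v]

/-- `H` is superlinear: `H(p)/‖p‖ → +∞` as `‖p‖ → +∞`. -/
def Superlinear {n : ℕ} (H : Euc n → ℝ) : Prop :=
  Tendsto (fun p : Euc n => H p / ‖p‖) (cocompact (Euc n)) atTop

lemma bddAbove_legendre_family {n : ℕ} {H : Euc n → ℝ} (hH : Continuous H)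
    (hs : Superlinear H) (q : Euc n) :
    BddAbove (Set.range fun p => ⟪q, p⟫ - H p) := by
  have h1 : ∀ᶠ p in cocompact (Euc n), ‖q‖ + 1 ≤ H p / ‖p‖ := hs.eventually_ge_atTop _
  obtain ⟨t, htc, hts⟩ := mem_cocompact.mp h1
  obtain ⟨R, hR0, hR⟩ := htc.isBounded.subset_closedBall_lt 0 0
  obtain ⟨C, hC⟩ := (isCompact_closedBall (0:Euc n) R).exists_bound_of_continuousOn
    hH.continuousOn
  have hC0 : 0 ≤ C := le_trans (norm_nonneg _) (hC 0 (by simp [hR0.le]))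
  refine ⟨‖q‖ * R + C, ?_⟩
  rintro _ ⟨p, rfl⟩
  dsimp only
  by_cases hp : ‖p‖ ≤ R
  · have h2 : ‖H p‖ ≤ C := hC p (by simpa [Metric.mem_closedBall, dist_zero_right] using hp)
    have h3 := abs_le.mp (by rwa [Real.norm_eq_abs] at h2)
    have hip := real_inner_le_norm q p
    have hq0 := norm_nonneg q
    nlinarith [norm_nonneg p]
  · push_neg at hp
    have hpt : p ∉ t := fun h => absurd (by simpa [dist_zero_right] using hR h) (not_le.mpr hp)
    have h4 : ‖q‖ + 1 ≤ H p / ‖p‖ := hts hpt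
    have hpn : (0:ℝ) < ‖p‖ := lt_trans hR0 hp
    have h5 : (‖q‖ + 1) * ‖p‖ ≤ H p := (le_div_iff₀ hpn).mp h4
    have hip := real_inner_le_norm q p
    have hq0 := norm_nonneg q
    nlinarith [norm_nonneg p]

lemma legendre_lin_lb {n : ℕ} {H : Euc n → ℝ} (hH : Continuous H)
    (hs : Superlinear H) (R : ℝ) (hR : 0 ≤ R) :
    ∃ C : ℝ, 0 ≤ C ∧ ∀ q : Euc n, R * ‖q‖ - C ≤ legendre H q := by
  obtain ⟨C, hC⟩ := (isCompact_closedBall (0:Euc n) R).exists_bound_of_continuousOn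
    hH.continuousOn
  have hC0 : 0 ≤ C := le_trans (norm_nonneg _) (hC 0 (by simp [hR]))
  refine ⟨C, hC0, fun q => ?_⟩
  by_cases hq : q = 0
  · have h1 : ⟪q, (0:Euc n)⟫ - H 0 ≤ legendre H q :=
      le_ciSup (bddAbove_legendre_family hH hs q) 0
    have h2' : ‖H 0‖ ≤ C := hC 0 (by simp [hR])
    have h2 := abs_le.mp (by rwa [Real.norm_eq_abs] at h2')
    simp only [hq, inner_zero_right, norm_zero, zero_sub] at h1 ⊢
    linarith
  · have hqn : (0:ℝ) < ‖q‖ := norm_pos_iff.mpr hq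
    set p : Euc n := (R / ‖q‖) • q with hp
    have hpnorm : ‖p‖ = R := by
      rw [hp, norm_smul, Real.norm_eq_abs, abs_of_nonneg (by positivity)]
      field_simp
    have hip : ⟪q, p⟫ = R * ‖q‖ := by
      rw [hp, real_inner_smul_right, real_inner_self_eq_norm_sq]
      field_simp
    have h1 : ⟪q, p⟫ - H p ≤ legendre H q :=
      le_ciSup (bddAbove_legendre_family hH hs q) p
    have h2' : ‖H p‖ ≤ C := hC p (by simp [Metric.mem_closedBall, dist_zero_right, hpnorm])
    have h2 := abs_le.mp (by rwa [Real.norm_eq_abs] at h2')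
    rw [hip] at h1
    linarith

/-- Forward stability: with `u_T^* := S_T^+(S_T^- u_T)`, one has
`S_T^- u_T^* = S_T^- u_T` and `u_T ≤ u_T^*` pointwise. -/
theorem forward_stability
    {n : ℕ} (hn : 0 < n) (T : ℝ) (hT : 0 < T)
    (H : Euc n → ℝ) (hH : ContDiff ℝ 2 H)
    (hHconv : PosDefHessian H) (hHsuper : Superlinear H)
    (uT : Euc n → ℝ) (huT : IsLip uT) :
    Sminus T (legendre H) (Splus T (legendre H) (Sminus T (legendre H) uT)) =
        Sminus T (legendre H) uT ∧
      ∀ x : Euc n, uT x ≤ Splus T (legendre H) (Sminus T (legendre H) uT) x := by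
  haveI : Nonempty (Euc n) := ⟨0⟩
  obtain ⟨Ku, hKu⟩ := huT
  have hHc : Continuous H := hH.continuous
  obtain ⟨C₀, hC₀0, hC₀⟩ := legendre_lin_lb hHc hHsuper ((Ku:ℝ)+1) (by positivity)
  set C : ℝ := T * C₀ with hCdef
  have hC0 : 0 ≤ C := by positivity
  -- scaled linear lower bound on the kernel
  have hlb : ∀ v : Euc n, ((Ku:ℝ)+1) * ‖v‖ - C ≤ T * legendre H (T⁻¹ • v) := by
    intro v
    have h1 := hC₀ (T⁻¹ • v)
    have hnorm : ‖(T⁻¹ : ℝ) • v‖ = T⁻¹ * ‖v‖ := by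
      rw [norm_smul, Real.norm_eq_abs, abs_of_pos (by positivity)]
    rw [hnorm] at h1
    have h2 := mul_le_mul_of_nonneg_left h1 hT.le
    calc ((Ku:ℝ)+1)*‖v‖ - C = T * (((Ku:ℝ)+1)*(T⁻¹*‖v‖) - C₀) := by
          rw [hCdef]; field_simp
      _ ≤ _ := h2
  -- Lipschitz bounds for uT
  have hu : ∀ a b : Euc n, uT a ≤ uT b + (Ku:ℝ) * ‖a - b‖ := by
    intro a b
    have h := hKu.dist_le_mul a b
    rw [Real.dist_eq, dist_eq_norm] at h
    linarith [le_abs_self (uT a - uT b)]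
  have hu0 : ∀ z : Euc n, uT z ≤ uT 0 + (Ku:ℝ) * ‖z‖ := by
    intro z; simpa using hu z 0
  have hu0' : ∀ z : Euc n, uT 0 - (Ku:ℝ) * ‖z‖ ≤ uT z := by
    intro z
    have := hu 0 z
    rw [zero_sub, norm_neg] at this
    linarith
  have hKmul : ∀ a b : ℝ, a ≤ b → (Ku:ℝ) * a ≤ (Ku:ℝ) * b :=
    fun a b h => mul_le_mul_of_nonneg_left h Ku.2
  -- pointwise bound for the Sminus family
  have hbound : ∀ y z : Euc n,
      uT z - T * legendre H (T⁻¹ • (z - y)) ≤ uT 0 + (Ku:ℝ) * ‖y‖ + C := by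
    intro y z
    have h1 := hlb (z - y)
    have h2 := hu0 z
    have h3 : ‖z‖ - ‖y‖ ≤ ‖z - y‖ := norm_sub_norm_le z y
    have h4 := hKmul _ _ h3
    have h5 := norm_nonneg (z - y)
    linarith
  have hBu : ∀ y : Euc n,
      BddAbove (Set.range fun z => uT z - T * legendre H (T⁻¹ • (z - y))) :=
    fun y => ⟨uT 0 + (Ku:ℝ) * ‖y‖ + C, by rintro _ ⟨z, rfl⟩; exact hbound y z⟩
  have hgub : ∀ y : Euc n,
      Sminus T (legendre H) uT y ≤ uT 0 + (Ku:ℝ) * ‖y‖ + C :=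
    fun y => ciSup_le (hbound y)
  have hglb : ∀ z : Euc n,
      uT z - T * legendre H 0 ≤ Sminus T (legendre H) uT z := by
    intro z
    have h := le_ciSup (hBu z) z
    simpa [Sminus, sub_self, smul_zero] using h
  -- BddBelow for the Splus family applied to g := Sminus uT
  have hBinf : ∀ y : Euc n,
      BddBelow (Set.range fun z =>
        Sminus T (legendre H) uT z + T * legendre H (T⁻¹ • (y - z))) := by
    intro y
    refine ⟨uT 0 - T * legendre H 0 - C - ((Ku:ℝ)+1) * ‖y‖, ?_⟩
    rintro _ ⟨z, rfl⟩
    have h1 := hglb z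
    have h2 := hu0' z
    have h3 := hlb (y - z)
    have h4 : ‖z‖ - ‖y‖ ≤ ‖y - z‖ := by
      rw [norm_sub_rev]; exact norm_sub_norm_le z y
    have h5 := hKmul _ _ h4
    have h6 := norm_nonneg z
    nlinarith [norm_nonneg (y - z), norm_nonneg y]
  have hfub : ∀ y : Euc n,
      Splus T (legendre H) (Sminus T (legendre H) uT) y ≤
        Sminus T (legendre H) uT y + T * legendre H 0 := by
    intro y
    have h := ciInf_le (hBinf y) y
    simpa [Splus, sub_self, smul_zero] using h
  have hBsup : ∀ x : Euc n,
      BddAbove (Set.range fun y =>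
        Splus T (legendre H) (Sminus T (legendre H) uT) y -
          T * legendre H (T⁻¹ • (y - x))) := by
    intro x
    refine ⟨uT 0 + (Ku:ℝ) * ‖x‖ + 2*C + T * legendre H 0, ?_⟩
    rintro _ ⟨y, rfl⟩
    have h1 := hfub y
    have h2 := hgub y
    have h3 := hlb (y - x)
    have h4 : ‖y‖ - ‖x‖ ≤ ‖y - x‖ := norm_sub_norm_le y x
    have h5 := hKmul _ _ h4
    have h6 := norm_nonneg (y - x)
    linarith
  -- Part 2 : uT ≤ Splus (Sminus uT)
  have hpt : ∀ x : Euc n,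
      uT x ≤ Splus T (legendre H) (Sminus T (legendre H) uT) x := by
    intro x
    rw [Splus]
    refine le_ciInf fun y => ?_
    have h1 : uT x - T * legendre H (T⁻¹ • (x - y)) ≤ Sminus T (legendre H) uT y :=
      le_ciSup (hBu y) x
    linarith
  refine ⟨?_, hpt⟩
  funext x
  refine le_antisymm ?_ ?_
  · -- Sminus (Splus (Sminus uT)) ≤ Sminus uT
    rw [Sminus]
    refine ciSup_le fun y => ?_
    have h1 : Splus T (legendre H) (Sminus T (legendre H) uT) y ≤
        Sminus T (legendre H) uT x + T * legendre H (T⁻¹ • (y - x)) :=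
      ciInf_le (hBinf y) x
    linarith
  · -- Sminus uT ≤ Sminus (Splus (Sminus uT))
    rw [show Sminus T (legendre H) uT x =
        ⨆ z : Euc n, (uT z - T * legendre H (T⁻¹ • (z - x))) from rfl]
    refine ciSup_le fun z => ?_
    have h1 : Splus T (legendre H) (Sminus T (legendre H) uT) z -
        T * legendre H (T⁻¹ • (z - x)) ≤
        Sminus T (legendre H) (Splus T (legendre H) (Sminus T (legendre H) uT)) x :=
      le_ciSup (hBsup x) z
    have h2 := hpt z
    linarith
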